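/- Every pair that is top reducible by some pair is top reducible by some TRB pair. -/

import Mathlib

namespace TRB

open MvPolynomial
open scoped Classical

/-- Monomials in the variables `x₁, …, xₙ`, identified with their exponent vectors;
a monomial `m₁` divides `m₂` iff the exponent vector of `m₁` is componentwise `≤`. -/
abbrev Mon (n : ℕ) := Fin n →₀ ℕ

/-- Module monomials (signatures) `x^α E_i` of the free module `P^d`. -/
abbrev Sig (n d : ℕ) := Mon n × Fin d

/-- The action of a monomial on a module monomial: `m • (x^α E_i) = (m x^α) E_i`. -/
noncomputable def Sig.smul {n d : ℕ} (m : Mon n) (s : Sig n d) : Sig n d := (m + s.1, s.2)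

/-- An admissible monomial order on the monomials of `P = K[x₁,…,xₙ]`:
a (strict) linear order such that `1 ⪯ m` for every monomial `m`, and
multiplication by a monomial is strictly monotone. -/
structure MonOrder (n : ℕ) where
  lt : Mon n → Mon n → Prop
  irrefl : ∀ a, ¬ lt a a
  trans : ∀ a b c, lt a b → lt b c → lt a c
  total : ∀ a b, lt a b ∨ a = b ∨ lt b a
  zero_lt : ∀ a, a ≠ 0 → lt 0 a
  mul_lt_mul : ∀ (m a b : Mon n), lt a b → lt (m + a) (m + b)

/-- An admissible signature order on module monomials:
a (strict) linear order with `s ⪯ m • s` for every monomial `m`, and such that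
multiplication by a monomial is strictly monotone. -/
structure SigOrder (n d : ℕ) where
  lt : Sig n d → Sig n d → Prop
  irrefl : ∀ s, ¬ lt s s
  trans : ∀ s t r, lt s t → lt t r → lt s r
  total : ∀ s t, lt s t ∨ s = t ∨ lt t s
  le_smul : ∀ (m : Mon n) (s : Sig n d), s = Sig.smul m s ∨ lt s (Sig.smul m s)
  smul_lt_smul : ∀ (m : Mon n) (s t : Sig n d), lt s t → lt (Sig.smul m s) (Sig.smul m t)

/-- Non-strict version of a monomial order. -/
def MonOrder.le {n : ℕ} (mo : MonOrder n) (a b : Mon n) : Prop := mo.lt a b ∨ a = b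

/-- Non-strict version of a signature order. -/
def SigOrder.le {n d : ℕ} (so : SigOrder n d) (s t : Sig n d) : Prop := so.lt s t ∨ s = t

/-- The `≺_m`-leading monomial of a polynomial (junk value `0` on the zero polynomial). -/
noncomputable def MonOrder.lm {n : ℕ} {K : Type*} [CommSemiring K] (mo : MonOrder n)
    (v : MvPolynomial (Fin n) K) : Mon n :=
  if h : ∃ m ∈ v.support, ∀ m' ∈ v.support, m' ≠ m → mo.lt m' m then h.choose else 0

/-- The signature of a module element `u ∈ P^d`: the `≺_s`-largest module monomial
`x^α E_i` whose coefficient in `u` is nonzero (junk value on `u = 0`). -/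
noncomputable def SigOrder.sig {n d : ℕ} [NeZero d] {K : Type*} [CommSemiring K]
    (so : SigOrder n d) (u : Fin d → MvPolynomial (Fin n) K) : Sig n d :=
  if h : ∃ s : Sig n d, (u s.2).coeff s.1 ≠ 0 ∧
      ∀ t : Sig n d, (u t.2).coeff t.1 ≠ 0 → t ≠ s → so.lt t s
  then h.choose else (0, ⟨0, Nat.pos_of_ne_zero (NeZero.ne d)⟩)

/-- The ambient type of candidate pairs `(u, v) ∈ P^d × P`. -/
abbrev PairT (K : Type*) [CommSemiring K] (n d : ℕ) :=
  (Fin d → MvPolynomial (Fin n) K) × MvPolynomial (Fin n) K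

variable {K : Type*} [Field K] {n d : ℕ}

/-- `(u, v)` is a pair (w.r.t. the input `f`) if `u ⬝ f = Σ_i u_i f_i = v`. -/
def IsPair (f : Fin d → MvPolynomial (Fin n) K) (p : PairT K n d) : Prop :=
  ∑ i, p.1 i * f i = p.2

/-- Leading monomial of a pair: `lm p = lm v`. -/
noncomputable def lmP (mo : MonOrder n) (p : PairT K n d) : Mon n := mo.lm p.2

/-- Signature of a pair: `sig p = sig u`. -/
noncomputable def sigP [NeZero d] (so : SigOrder n d) (p : PairT K n d) : Sig n d :=
  so.sig p.1

/-- The pair order: `p ≺_p q` iff `lm(p)·sig(q) ≺_s lm(q)·sig(p)`. -/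
def PairLt [NeZero d] (mo : MonOrder n) (so : SigOrder n d) (p q : PairT K n d) : Prop :=
  so.lt (Sig.smul (lmP mo p) (sigP so q)) (Sig.smul (lmP mo q) (sigP so p))

/-- Pairs are similar if `lm(p)·sig(q) = lm(q)·sig(p)`. -/
def Similar [NeZero d] (mo : MonOrder n) (so : SigOrder n d) (p q : PairT K n d) : Prop :=
  Sig.smul (lmP mo p) (sigP so q) = Sig.smul (lmP mo q) (sigP so p)

/-- `p ⪯_p q`. -/
def PairLE [NeZero d] (mo : MonOrder n) (so : SigOrder n d) (p q : PairT K n d) : Prop :=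
  PairLt mo so p q ∨ Similar mo so p q

/-- Pairs are equivalent if they have the same signature and the same leading monomial. -/
def Equivalent [NeZero d] (mo : MonOrder n) (so : SigOrder n d) (p q : PairT K n d) : Prop :=
  sigP so p = sigP so q ∧ lmP mo p = lmP mo q

/-- `p` is top reducible by `q`: both non-syzygy, `p ≺_p q` and `lm(q) ∣ lm(p)`. -/
def TopRed [NeZero d] (mo : MonOrder n) (so : SigOrder n d) (p q : PairT K n d) : Prop :=
  p.2 ≠ 0 ∧ q.2 ≠ 0 ∧ PairLt mo so p q ∧ lmP mo q ≤ lmP mo p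

/-- A TRP pair: a non-syzygy pair that is top reducible by no pair. -/
def IsTRP [NeZero d] (f : Fin d → MvPolynomial (Fin n) K) (mo : MonOrder n)
    (so : SigOrder n d) (p : PairT K n d) : Prop :=
  IsPair f p ∧ p.2 ≠ 0 ∧ ∀ q : PairT K n d, IsPair f q → ¬ TopRed mo so p q

/-- Divisibility of signatures: `x^α E_i ∣ x^β E_j` iff `i = j` and `x^α ∣ x^β`. -/
def SigDvd {n d : ℕ} (s t : Sig n d) : Prop := s.2 = t.2 ∧ s.1 ≤ t.1

/-- A TRB pair: a TRP pair `p` such that no TRP pair similar to `p` has signature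
properly dividing `sig p`. -/
def IsTRB [NeZero d] (f : Fin d → MvPolynomial (Fin n) K) (mo : MonOrder n)
    (so : SigOrder n d) (p : PairT K n d) : Prop :=
  IsTRP f mo so p ∧ ∀ q : PairT K n d, IsTRP f mo so q → Similar mo so p q →
    SigDvd (sigP so q) (sigP so p) → sigP so q = sigP so p

/-- A signature is syzygy if it is the signature of a syzygy pair `(u, 0)`, `u ≠ 0`. -/
def IsSyzygySig [NeZero d] (f : Fin d → MvPolynomial (Fin n) K) (so : SigOrder n d)
    (s : Sig n d) : Prop :=
  ∃ u : Fin d → MvPolynomial (Fin n) K, u ≠ 0 ∧ IsPair f (u, 0) ∧ so.sig u = s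

/-- The sub-order `≺_{s,i}` on monomials: `x^α ≺_{s,i} x^β` iff `x^α E_i ≺_s x^β E_i`. -/
def SubOrder {n d : ℕ} (so : SigOrder n d) (i : Fin d) (a b : Mon n) : Prop :=
  so.lt (a, i) (b, i)

/-- The sub-order `≺_{s,i}` coincides with `≺_m`. -/
def EqOrders {n d : ℕ} (so : SigOrder n d) (mo : MonOrder n) (i : Fin d) : Prop :=
  ∀ a b : Mon n, SubOrder so i a b ↔ mo.lt a b

/-- `≺_m` and `≺_s` are almost compatible: either every sub-order `≺_{s,i}` coincides
with `≺_m`, or there is exactly one index `k` with `≺_{s,k} ≠ ≺_m`, and this `k`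
satisfies `x^α E_k ≺_s E_i` for every monomial `x^α` and every index `i ≠ k`. -/
def AlmostCompatible {n d : ℕ} (mo : MonOrder n) (so : SigOrder n d) : Prop :=
  (∀ i, EqOrders so mo i) ∨
  (∃ k, ¬ EqOrders so mo k ∧ (∀ i, i ≠ k → EqOrders so mo i) ∧
    ∀ (a : Mon n) (i : Fin d), i ≠ k → so.lt (a, k) ((0 : Mon n), i))

/-- `≺_m` and `≺_s` are compatible: `s₁ ⪯_s s₂` and `m₁ ⪯_m m₂` imply
`m₁·s₁ ⪯_s m₂·s₂`, with equality only when `s₁ = s₂` and `m₁ = m₂`. -/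
def Compatible {n d : ℕ} (mo : MonOrder n) (so : SigOrder n d) : Prop :=
  ∀ (s₁ s₂ : Sig n d) (m₁ m₂ : Mon n), so.le s₁ s₂ → mo.le m₁ m₂ →
    so.le (Sig.smul m₁ s₁) (Sig.smul m₂ s₂) ∧
    (Sig.smul m₁ s₁ = Sig.smul m₂ s₂ → s₁ = s₂ ∧ m₁ = m₂)

/-- The multiplied pair `m·p = (X^m · u, X^m · v)`. -/
noncomputable def mulPair (m : Mon n) (p : PairT K n d) : PairT K n d :=
  (fun i => monomial m (1 : K) * p.1 i, monomial m (1 : K) * p.2)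

/-- `[m, p]` is the J-pair of the non-similar non-syzygy pairs `p₁, p₂`:
`p` is the `≺_p`-smaller of the two and `m·lm(p) = lcm(lm p₁, lm p₂)`. -/
def IsJPair [NeZero d] (mo : MonOrder n) (so : SigOrder n d) (p₁ p₂ : PairT K n d)
    (m : Mon n) (p : PairT K n d) : Prop :=
  p₁.2 ≠ 0 ∧ p₂.2 ≠ 0 ∧ ¬ Similar mo so p₁ p₂ ∧
  ((PairLt mo so p₁ p₂ ∧ p = p₁) ∨ (PairLt mo so p₂ p₁ ∧ p = p₂)) ∧
  m + lmP mo p = lmP mo p₁ ⊔ lmP mo p₂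

/-- `G` is a Gröbner basis of the ideal `⟨f₁,…,f_d⟩` w.r.t. `≺_m`: `G` consists of
elements of the ideal, and for every nonzero `v` in the ideal there is a nonzero
`g ∈ G` with `lm g ∣ lm v`. -/
def IsGroebnerBasis (mo : MonOrder n) (f : Fin d → MvPolynomial (Fin n) K)
    (G : Set (MvPolynomial (Fin n) K)) : Prop :=
  (∀ g ∈ G, g ∈ Ideal.span (Set.range f)) ∧
  ∀ v ∈ Ideal.span (Set.range f), v ≠ 0 →
    ∃ g ∈ G, g ≠ 0 ∧ mo.lm g ≤ mo.lm v


section Aux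

variable {n d : ℕ}

lemma sig_smul_smul (a b : Mon n) (s : Sig n d) :
    Sig.smul a (Sig.smul b s) = Sig.smul (a + b) s := by
  simp [Sig.smul, add_assoc]

lemma SigOrder.asymm (so : SigOrder n d) {s t : Sig n d} (h : so.lt s t) : ¬ so.lt t s :=
  fun h' => so.irrefl s (so.trans _ _ _ h h')

lemma smul_lt_cancel (so : SigOrder n d) {m : Mon n} {s t : Sig n d}
    (h : so.lt (Sig.smul m s) (Sig.smul m t)) : so.lt s t := by
  rcases so.total s t with h' | h' | h'
  · exact h'
  · subst h'; exact absurd h (so.irrefl _)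
  · exact absurd (so.smul_lt_smul m _ _ h') (so.asymm h)

lemma le_lt_trans (so : SigOrder n d) {s t u : Sig n d} (h1 : so.le s t) (h2 : so.lt t u) :
    so.lt s u := by
  rcases h1 with h1 | rfl
  · exact so.trans _ _ _ h1 h2
  · exact h2

lemma lt_le_trans (so : SigOrder n d) {s t u : Sig n d} (h1 : so.lt s t) (h2 : so.le t u) :
    so.lt s u := by
  rcases h2 with h2 | rfl
  · exact so.trans _ _ _ h1 h2
  · exact h1

lemma le_smul' (so : SigOrder n d) (m : Mon n) (s : Sig n d) : so.le s (Sig.smul m s) := by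
  rcases so.le_smul m s with h | h
  · exact Or.inr h
  · exact Or.inl h

/-- Dickson: the signature order is well-founded. -/
lemma sig_lt_wf (so : SigOrder n d) : WellFounded so.lt := by
  haveI : IsIrrefl (Sig n d) so.lt := ⟨so.irrefl⟩
  haveI : IsTrans (Sig n d) so.lt := ⟨so.trans⟩
  haveI : IsStrictOrder (Sig n d) so.lt := {}
  rw [RelEmbedding.wellFounded_iff_isEmpty]
  constructor
  intro e
  have hpwo : (Set.univ : Set (Sig n d)).PartiallyWellOrderedOn
      (fun s t : Sig n d => s.1 ≤ t.1 ∧ s.2 = t.2) := by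
    have h1 : (Set.univ : Set (Mon n)).PartiallyWellOrderedOn (· ≤ ·) := Set.partiallyWellOrderedOn_univ_iff.2 wellQuasiOrdered_le
    haveI : IsRefl (Fin d) Eq := ⟨fun _ => rfl⟩
    have h2 : (Set.univ : Set (Fin d)).PartiallyWellOrderedOn Eq :=
      Set.Finite.partiallyWellOrderedOn Set.finite_univ
    have := h1.prod h2
    simpa using this
  obtain ⟨a, b, hab, hle, heq⟩ := hpwo.exists_lt (f := fun k => e k) (fun _ => Set.mem_univ _)
  have hlt : so.lt (e b) (e a) := e.map_rel_iff.2 hab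
  have hsm : Sig.smul ((e b).1 - (e a).1) (e a) = e b := by
    have : ((e b).1 - (e a).1) + (e a).1 = (e b).1 := tsub_add_cancel_of_le hle
    simp [Sig.smul, this, heq]
  rcases so.le_smul ((e b).1 - (e a).1) (e a) with h | h
  · rw [hsm] at h; rw [← h] at hlt; exact so.irrefl _ hlt
  · rw [hsm] at h; exact so.asymm h hlt

lemma key_trans (so : SigOrder n d) {a b c : Mon n} {s t u : Sig n d}
    (h1 : so.lt (Sig.smul a t) (Sig.smul b s)) (h2 : so.lt (Sig.smul b u) (Sig.smul c t)) :
    so.lt (Sig.smul a u) (Sig.smul c s) := by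
  apply smul_lt_cancel so (m := b)
  have A := so.smul_lt_smul a _ _ h2
  have B := so.smul_lt_smul c _ _ h1
  rw [sig_smul_smul, sig_smul_smul] at A
  rw [sig_smul_smul, sig_smul_smul, add_comm c a] at B
  rw [sig_smul_smul, sig_smul_smul, add_comm b a, add_comm b c]
  exact so.trans _ _ _ A B

lemma sim_lt (so : SigOrder n d) {a b b' : Mon n} {s s' t : Sig n d}
    (hs : Sig.smul b s' = Sig.smul b' s)
    (h : so.lt (Sig.smul a s) (Sig.smul b t)) :
    so.lt (Sig.smul a s') (Sig.smul b' t) := by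
  apply smul_lt_cancel so (m := b)
  have A := so.smul_lt_smul b' _ _ h
  rw [sig_smul_smul, sig_smul_smul, add_comm b' a, add_comm b' b] at A
  rw [sig_smul_smul, sig_smul_smul]
  have e : Sig.smul (b + a) s' = Sig.smul (a + b') s := by
    rw [add_comm b a, ← sig_smul_smul, ← sig_smul_smul, hs]
  rw [e]; exact A

lemma sim_comp {a b c : Mon n} {s t u : Sig n d}
    (e1 : Sig.smul a t = Sig.smul b s) (e2 : Sig.smul b u = Sig.smul c t) :
    Sig.smul a u = Sig.smul c s := by
  have h1 : a + t.1 = b + s.1 := congrArg Prod.fst e1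
  have h2 : b + u.1 = c + t.1 := congrArg Prod.fst e2
  have h1' : t.2 = s.2 := by have := congrArg Prod.snd e1; simpa [Sig.smul] using this
  have h2' : u.2 = t.2 := by have := congrArg Prod.snd e2; simpa [Sig.smul] using this
  have key : b + (a + u.1) = b + (c + s.1) := by
    calc b + (a + u.1) = a + (b + u.1) := by rw [add_left_comm]
      _ = a + (c + t.1) := by rw [h2]
      _ = c + (a + t.1) := by rw [add_left_comm]
      _ = c + (b + s.1) := by rw [h1]
      _ = b + (c + s.1) := by rw [add_left_comm]
  have : a + u.1 = c + s.1 := add_left_cancel key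
  simp [Sig.smul, this, h2'.trans h1']

lemma mu_lt (so : SigOrder n d) {a b : Mon n} {s t : Sig n d}
    (h : so.lt (Sig.smul a t) (Sig.smul b s)) (hd : b ≤ a) :
    so.lt (Sig.smul b t) (Sig.smul a s) := by
  have e1 : Sig.smul (a - b) (Sig.smul b t) = Sig.smul a t := by
    rw [sig_smul_smul, tsub_add_cancel_of_le hd]
  have e2 : Sig.smul (a - b) (Sig.smul b s) = Sig.smul a s := by
    rw [sig_smul_smul, tsub_add_cancel_of_le hd]
  have l1 : so.le (Sig.smul b t) (Sig.smul a t) := by rw [← e1]; exact le_smul' so _ _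
  have l2 : so.le (Sig.smul b s) (Sig.smul a s) := by rw [← e2]; exact le_smul' so _ _
  exact lt_le_trans so (le_lt_trans so l1 h) l2

lemma dvd_lt (so : SigOrder n d) {s t : Sig n d} (h : SigDvd s t) (hne : s ≠ t) :
    so.lt s t := by
  have hsm : Sig.smul (t.1 - s.1) s = t := by
    have : (t.1 - s.1) + s.1 = t.1 := tsub_add_cancel_of_le h.2
    simp [Sig.smul, this, h.1]
  rcases so.le_smul (t.1 - s.1) s with h' | h'
  · rw [hsm] at h'; exact absurd h' hne
  · rw [hsm] at h'; exact h'

lemma sigDvd_trans {s t u : Sig n d} (h1 : SigDvd s t) (h2 : SigDvd t u) : SigDvd s u :=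
  ⟨h1.1.trans h2.1, h1.2.trans h2.2⟩

lemma lm_le_of_sim_dvd {a b : Mon n} {s t : Sig n d}
    (hsim : Sig.smul a t = Sig.smul b s) (hdvd : SigDvd t s) : b ≤ a := by
  have h1 : a + t.1 = b + s.1 := congrArg Prod.fst hsim
  have hle : t.1 ≤ s.1 := hdvd.2
  rw [Finsupp.le_def]
  intro i
  have h1i : a i + t.1 i = b i + s.1 i := by
    have := DFunLike.congr_fun h1 i
    simpa using this
  have hlei : t.1 i ≤ s.1 i := hle i
  omega

end Aux


/-- Every pair that is top reducible by some pair is top reducible by some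
TRB pair. -/
theorem topRed_by_TRB {K : Type*} [Field K] {n d : ℕ} [NeZero d]
    (mo : MonOrder n) (so : SigOrder n d) (f : Fin d → MvPolynomial (Fin n) K)
    (p : PairT K n d) (hp : IsPair f p)
    (h : ∃ q : PairT K n d, IsPair f q ∧ TopRed mo so p q) :
    ∃ q : PairT K n d, IsPair f q ∧ IsTRB f mo so q ∧ TopRed mo so p q := by
  classical
  obtain ⟨q0, hq0⟩ := h
  have hp2 : p.2 ≠ 0 := hq0.2.1
  -- Step 1: find a TRP pair reducing p, by minimizing lm·sig over reducers of p
  set S1 : Set (PairT K n d) := {q | IsPair f q ∧ TopRed mo so p q} with hS1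
  obtain ⟨m, hm, hmin⟩ := (sig_lt_wf so).has_min
    ((fun q => Sig.smul (lmP mo q) (sigP so q)) '' S1) ⟨_, ⟨q0, hq0, rfl⟩⟩
  obtain ⟨q, hqS1, rfl⟩ := hm
  have hqTR : TopRed mo so p q := hqS1.2
  have hqTRP : IsTRP f mo so q := by
    refine ⟨hqS1.1, hqTR.2.1, ?_⟩
    intro r hr hTR
    obtain ⟨hq2, hr2, hlt, hdvd⟩ := hTR
    have hpr : TopRed mo so p r :=
      ⟨hp2, hr2, key_trans so hqTR.2.2.1 hlt, le_trans hdvd hqTR.2.2.2⟩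
    have hmu : so.lt (Sig.smul (lmP mo r) (sigP so r)) (Sig.smul (lmP mo q) (sigP so q)) :=
      mu_lt so hlt hdvd
    exact hmin _ ⟨r, ⟨hr, hpr⟩, rfl⟩ hmu
  -- Step 2: find a TRB pair among TRP pairs similar to q with dividing signature
  set T : Set (PairT K n d) :=
    {q' | IsTRP f mo so q' ∧ Similar mo so q q' ∧ SigDvd (sigP so q') (sigP so q)} with hT
  have hqT : q ∈ T := ⟨hqTRP, rfl, ⟨rfl, le_refl _⟩⟩
  obtain ⟨m', hm', hmin'⟩ := (sig_lt_wf so).has_min ((fun q' => sigP so q') '' T) ⟨_, ⟨q, hqT, rfl⟩⟩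
  obtain ⟨q', hq'T, rfl⟩ := hm'
  obtain ⟨hq'TRP, hq'sim, hq'dvd⟩ := hq'T
  have hlmq' : lmP mo q' ≤ lmP mo q := lm_le_of_sim_dvd hq'sim hq'dvd
  have hTRB : IsTRB f mo so q' := by
    refine ⟨hq'TRP, ?_⟩
    intro r hrTRP hsim hdvd
    by_contra hne
    have hrT : r ∈ T := ⟨hrTRP, sim_comp hq'sim hsim, sigDvd_trans hdvd hq'dvd⟩
    exact hmin' _ ⟨r, hrT, rfl⟩ (dvd_lt so hdvd hne)
  refine ⟨q', hq'TRP.1, hTRB, hp2, hq'TRP.2.1, ?_, le_trans hlmq' hqTR.2.2.2⟩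
  exact sim_lt so hq'sim hqTR.2.2.1

end TRB
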